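/- arXiv:1605.07088 — 2 statements merged into one kernel-verified Lean document; each statement's English description precedes it below -/
import Mathlib

section
/- Comparison principle: let 0 < α < 1, h > 0, and u, v : ℤ → ℝ bounded with u(j₀) = v(j₀) and u(j) ≥ v(j) for all j ≥ j₀. Then (δ_right)^α u(j₀) ≤ (δ_right)^α v(j₀), with equality if and only if u(j) = v(j) for all j ≥ j₀. -/
open Real

/-- The generalized binomial coefficient `(α choose m) = α(α−1)⋯(α−m+1)/m!`. -/
noncomputable def rchoose (α : ℝ) (m : ℕ) : ℝ :=
  (∏ i ∈ Finset.range m, (α - i)) / (m.factorial : ℝ)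

/-- The kernel `Λ^α(m) = (−1)^m (α choose m)`. -/
noncomputable def Lam (α : ℝ) (m : ℕ) : ℝ := (-1) ^ m * rchoose α m

/-- The fractional discrete derivative on the mesh `ℤ_h`:
`(δ_right)^α u(n) = h^{-α} ∑_{m=0}^∞ Λ^α(m) u(n+m)`. -/
noncomputable def deltaRightPow (α h : ℝ) (u : ℤ → ℝ) (n : ℤ) : ℝ :=
  h ^ (-α) * ∑' m : ℕ, Lam α m * u (n + (m : ℤ))

lemma Lam_zero (α : ℝ) : Lam α 0 = 1 := by
  simp [Lam, rchoose]

lemma Lam_succ (α : ℝ) (m : ℕ) :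
    Lam α (m + 1) = Lam α m * (((m : ℝ) - α) / (m + 1)) := by
  have hm1 : ((m : ℝ) + 1) ≠ 0 := by positivity
  have hf : ((m.factorial : ℝ)) ≠ 0 := by exact_mod_cast m.factorial_ne_zero
  simp only [Lam, rchoose, Finset.prod_range_succ, Nat.factorial_succ, pow_succ]
  push_cast
  field_simp
  ring

/-- the tail product c m -/
noncomputable def cprod (α : ℝ) (m : ℕ) : ℝ :=
  ∏ i ∈ Finset.range m, (((i : ℝ) + 1 - α) / ((i : ℝ) + 1))

lemma cprod_pos (α : ℝ) (hα1 : α < 1) (m : ℕ) : 0 < cprod α m := by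
  apply Finset.prod_pos
  intro i _
  have : α < (i : ℝ) + 1 := by
    have : (0 : ℝ) ≤ i := Nat.cast_nonneg i
    linarith
  have h1 : (0 : ℝ) < (i : ℝ) + 1 := by positivity
  exact div_pos (by linarith) h1

lemma cprod_le_one (α : ℝ) (hα : 0 < α) (hα1 : α < 1) (m : ℕ) : cprod α m ≤ 1 := by
  apply Finset.prod_le_one
  · intro i _
    have h1 : (0 : ℝ) < (i : ℝ) + 1 := by positivity
    have h2 : α < (i : ℝ) + 1 := by
      have : (0 : ℝ) ≤ i := Nat.cast_nonneg i
      linarith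
    exact div_nonneg (by linarith) (by linarith)
  · intro i _
    have h1 : (0 : ℝ) < (i : ℝ) + 1 := by positivity
    rw [div_le_one h1]
    linarith

lemma cprod_succ (α : ℝ) (m : ℕ) :
    cprod α (m + 1) = cprod α m * (((m : ℝ) + 1 - α) / ((m : ℝ) + 1)) := by
  unfold cprod
  rw [Finset.prod_range_succ]

lemma Lam_succ_eq (α : ℝ) (m : ℕ) :
    Lam α (m + 1) = -α / ((m : ℝ) + 1) * cprod α m := by
  induction m with
  | zero => simp [Lam_succ, Lam_zero, cprod]
  | succ m ih =>
      rw [Lam_succ, ih, cprod_succ]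
      have h1 : ((m : ℝ) + 1) ≠ 0 := by positivity
      have h2 : ((m : ℝ) + 2) ≠ 0 := by positivity
      push_cast
      field_simp

lemma Lam_succ_neg (α : ℝ) (hα : 0 < α) (hα1 : α < 1) (m : ℕ) : Lam α (m + 1) < 0 := by
  rw [Lam_succ_eq]
  have h1 : (0 : ℝ) < (m : ℝ) + 1 := by positivity
  have := cprod_pos α hα1 m
  have : -α / ((m : ℝ) + 1) < 0 := div_neg_of_neg_of_pos (by linarith) h1
  nlinarith [cprod_pos α hα1 m]

lemma sum_Lam (α : ℝ) (m : ℕ) :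
    ∑ k ∈ Finset.range (m + 1), Lam α k = cprod α m := by
  induction m with
  | zero => simp [Lam_zero, cprod]
  | succ m ih =>
      rw [Finset.sum_range_succ, ih, Lam_succ_eq, cprod_succ]
      have h1 : ((m : ℝ) + 1) ≠ 0 := by positivity
      field_simp
      ring

lemma sum_abs_Lam_le (α : ℝ) (hα : 0 < α) (hα1 : α < 1) (N : ℕ) :
    ∑ k ∈ Finset.range N, |Lam α k| ≤ 2 := by
  cases N with
  | zero => norm_num
  | succ m =>
      rw [Finset.sum_range_succ']
      have h1 : ∀ i ∈ Finset.range m, |Lam α (i + 1)| = -Lam α (i + 1) := by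
        intro i _
        exact abs_of_neg (Lam_succ_neg α hα hα1 i)
      rw [Finset.sum_congr rfl h1]
      have h2 : ∑ i ∈ Finset.range m, Lam α (i + 1) = cprod α m - 1 := by
        have := sum_Lam α m
        rw [Finset.sum_range_succ'] at this
        simp [Lam_zero] at this
        linarith
      have h3 : ∑ i ∈ Finset.range m, -Lam α (i + 1) = 1 - cprod α m := by
        rw [Finset.sum_neg_distrib, h2]; ring
      rw [h3, Lam_zero]
      have := cprod_pos α hα1 m
      simp
      linarith

lemma summable_abs_Lam (α : ℝ) (hα : 0 < α) (hα1 : α < 1) :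
    Summable (fun m => |Lam α m|) :=
  summable_of_sum_range_le (fun _ => abs_nonneg _) (sum_abs_Lam_le α hα hα1)

lemma summable_Lam_mul (α : ℝ) (hα : 0 < α) (hα1 : α < 1) (w : ℕ → ℝ) (M : ℝ)
    (hw : ∀ m, |w m| ≤ M) : Summable (fun m => Lam α m * w m) := by
  apply Summable.of_abs
  apply Summable.of_nonneg_of_le (fun m => abs_nonneg _)
    (fun m => ?_) ((summable_abs_Lam α hα hα1).mul_right M)
  rw [abs_mul]
  exact mul_le_mul_of_nonneg_left (hw m) (abs_nonneg _)


/-- Comparison principle for the fractional discrete derivative. -/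
theorem comparison_principle (α h : ℝ) (hα : 0 < α) (hα1 : α < 1) (hh : 0 < h)
    (u v : ℤ → ℝ) (M : ℝ) (hu : ∀ n, |u n| ≤ M) (hv : ∀ n, |v n| ≤ M) (j₀ : ℤ)
    (heq : u j₀ = v j₀) (hge : ∀ j, j₀ ≤ j → v j ≤ u j) :
    deltaRightPow α h u j₀ ≤ deltaRightPow α h v j₀ ∧
      (deltaRightPow α h u j₀ = deltaRightPow α h v j₀ ↔ ∀ j, j₀ ≤ j → u j = v j) := by
  set w : ℕ → ℝ := fun m => u (j₀ + (m : ℤ)) - v (j₀ + (m : ℤ)) with hwdef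
  have hw0 : w 0 = 0 := by simp [hwdef, heq]
  have hwnn : ∀ m, 0 ≤ w m := fun m =>
    sub_nonneg.mpr (hge _ (by omega))
  have hSu : Summable (fun m : ℕ => Lam α m * u (j₀ + (m : ℤ))) :=
    summable_Lam_mul α hα hα1 _ M (fun m => hu _)
  have hSv : Summable (fun m : ℕ => Lam α m * v (j₀ + (m : ℤ))) :=
    summable_Lam_mul α hα hα1 _ M (fun m => hv _)
  have hSw : Summable (fun m : ℕ => Lam α m * w m) := by
    have := hSu.sub hSv
    convert this using 2 with m
    · rfl
    simp [hwdef]; ring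
  have hterm : ∀ m, Lam α m * w m ≤ 0 := by
    intro m
    cases m with
    | zero => simp [hw0]
    | succ m => exact mul_nonpos_of_nonpos_of_nonneg (Lam_succ_neg α hα hα1 m).le (hwnn _)
  have hdiff : (∑' m : ℕ, Lam α m * u (j₀ + (m : ℤ))) - (∑' m : ℕ, Lam α m * v (j₀ + (m : ℤ)))
      = ∑' m : ℕ, Lam α m * w m := by
    rw [← Summable.tsum_sub hSu hSv]
    congr 1; funext m; simp [hwdef]; ring
  have hpos : (0 : ℝ) < h ^ (-α) := Real.rpow_pos_of_pos hh _
  have hle : deltaRightPow α h u j₀ ≤ deltaRightPow α h v j₀ := by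
    unfold deltaRightPow
    apply mul_le_mul_of_nonneg_left _ hpos.le
    have : (∑' m : ℕ, Lam α m * w m) ≤ 0 := tsum_nonpos hterm
    linarith [hdiff]
  refine ⟨hle, ?_, ?_⟩
  · intro hE
    have hS : (∑' m : ℕ, Lam α m * w m) = 0 := by
      unfold deltaRightPow at hE
      have := mul_left_cancel₀ (ne_of_gt hpos) hE
      linarith [hdiff]
    have hall : ∀ m, Lam α m * w m = 0 := by
      intro m
      by_contra hne
      have hlt : Lam α m * w m < 0 := lt_of_le_of_ne (hterm m) hne
      have : (0 : ℝ) < ∑' m : ℕ, -(Lam α m * w m) := by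
        refine Summable.tsum_pos hSw.neg (fun i => neg_nonneg.mpr (hterm i)) m (by linarith)
      rw [tsum_neg, hS] at this
      simp at this
    have hwz : ∀ m, w m = 0 := by
      intro m
      cases m with
      | zero => exact hw0
      | succ m =>
          have := hall (m + 1)
          have hne := (Lam_succ_neg α hα hα1 m).ne
          exact (mul_eq_zero.mp this).resolve_left hne
    intro j hj
    have hm : j₀ + ((j - j₀).toNat : ℤ) = j := by omega
    have := hwz (j - j₀).toNat
    simp only [hwdef, hm] at this
    linarith
  · intro hE
    have hwz : ∀ m : ℕ, u (j₀ + (m : ℤ)) = v (j₀ + (m : ℤ)) := fun m =>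
      hE _ (by omega)
    unfold deltaRightPow
    congr 1
    exact tsum_congr fun m => by rw [hwz m]
end

section
/- Hölder regularity of the fractional difference: let 0 < α < β ≤ 1 and h > 0. If u : ℤ → ℝ satisfies |u(j) − u(m)| ≤ M h^β |j−m|^β for all j, m, then there is a constant C depending only on α (not on h, u) with |(δ_right)^α u(j) − (δ_right)^α u(m)| ≤ C M h^{β−α} |j−m|^{β−α} for all j ≠ m. -/
open Real

open Finset

lemma rchoose_pascal (α : ℝ) (n : ℕ) :
    rchoose α (n+1) = rchoose (α-1) n + rchoose (α-1) (n+1) := by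
  unfold rchoose
  have hfac : ((n+1).factorial : ℝ) = (n+1) * (n.factorial : ℝ) := by
    push_cast [Nat.factorial_succ]; ring
  have hfacpos : (0:ℝ) < (n.factorial : ℝ) := by positivity
  have key : ∏ i ∈ range (n+1), (α - i) = α * ∏ i ∈ range n, (α - 1 - i) := by
    rw [Finset.prod_range_succ'] -- ∏_{i<n+1} f i = (∏ i<n, f (i+1)) * f 0
    simp only [Nat.cast_zero, sub_zero, Nat.cast_add, Nat.cast_one]
    rw [mul_comm]
    congr 1
    apply Finset.prod_congr rfl
    intro i _
    ring
  have key2 : ∏ i ∈ range (n+1), (α - 1 - i) = (α - 1 - n) * ∏ i ∈ range n, (α - 1 - i) := by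
    rw [Finset.prod_range_succ]; ring
  rw [key, key2, hfac]
  field_simp
  ring

lemma lam_partial_sum (α : ℝ) (N : ℕ) :
    ∑ m ∈ range (N+1), Lam α m = (-1)^N * rchoose (α-1) N := by
  induction N with
  | zero => simp [Lam, rchoose]
  | succ N ih =>
    rw [Finset.sum_range_succ, ih, Lam, rchoose_pascal]
    ring

-- |rchoose (α-1) N| as a product
lemma abs_rchoose_sub_one (α : ℝ) (hα0 : 0 < α) (hα1 : α < 1) (N : ℕ) :
    |rchoose (α-1) N| = ∏ i ∈ range N, (1 - α / (i+1)) := by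
  have h1 : ∀ i : ℕ, (0:ℝ) < (i:ℝ) + 1 - α := by
    intro i
    have : (0:ℝ) ≤ (i:ℝ) := Nat.cast_nonneg i
    linarith
  have hfac : (N.factorial : ℝ) = ∏ i ∈ range N, ((i:ℝ)+1) := by
    rw [← Finset.prod_range_add_one_eq_factorial]
    push_cast; rfl
  unfold rchoose
  rw [abs_div, abs_of_pos (by positivity : (0:ℝ) < (N.factorial:ℝ)), hfac,
    Finset.abs_prod, ← Finset.prod_div_distrib]
  apply Finset.prod_congr rfl
  intro i _
  rw [abs_of_nonpos (by have := h1 i; linarith : α - 1 - (i:ℝ) ≤ 0)]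
  have hi : ((i:ℝ)+1) ≠ 0 := by positivity
  field_simp
  ring

-- ∏ (1 - α/(i+1)) ≤ (N+1)^(-α)
lemma prod_one_sub_le (α : ℝ) (hα0 : 0 < α) (hα1 : α < 1) (N : ℕ) :
    ∏ i ∈ range N, (1 - α / (i+1)) ≤ ((N:ℝ)+1) ^ (-α) := by
  have hlog : Real.log ((N:ℝ)+1) ≤ ∑ i ∈ range N, 1/((i:ℝ)+1) := by
    induction N with
    | zero => simp
    | succ N ih =>
      rw [Finset.sum_range_succ]
      have h2 : Real.log ((N:ℝ)+1+1) - Real.log ((N:ℝ)+1) ≤ 1/((N:ℝ)+1) := by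
        rw [← Real.log_div (by positivity) (by positivity)]
        have := Real.log_le_sub_one_of_pos
          (show (0:ℝ) < ((N:ℝ)+1+1)/((N:ℝ)+1) by positivity)
        have heq : ((N:ℝ)+1+1)/((N:ℝ)+1) - 1 = 1/((N:ℝ)+1) := by
          field_simp
          ring
        linarith [this, heq ▸ this]
      push_cast
      linarith
  have hterm : ∀ i ∈ range N, (1 - α/((i:ℝ)+1)) ≤ Real.exp (-(α/((i:ℝ)+1))) := by
    intro i _
    have := Real.add_one_le_exp (-(α/((i:ℝ)+1)))
    linarith
  calc ∏ i ∈ range N, (1 - α / (i+1))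
      ≤ ∏ i ∈ range N, Real.exp (-(α/((i:ℝ)+1))) := by
        apply Finset.prod_le_prod
        · intro i _
          have hi : α/((i:ℝ)+1) ≤ α := by
            rw [div_le_iff₀ (by positivity)]
            nlinarith [Nat.cast_nonneg (α := ℝ) i]
          linarith
        · exact hterm
    _ = Real.exp (-α * ∑ i ∈ range N, 1/((i:ℝ)+1)) := by
        rw [← Real.exp_sum]
        congr 1
        rw [Finset.mul_sum]
        apply Finset.sum_congr rfl
        intro i _; ring
    _ ≤ Real.exp (-α * Real.log ((N:ℝ)+1)) := by
        apply Real.exp_le_exp.2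
        have := hlog
        nlinarith
    _ = ((N:ℝ)+1) ^ (-α) := by
        rw [Real.rpow_def_of_pos (by positivity)]
        ring_nf

lemma abs_lam_eq (α : ℝ) (hα0 : 0 < α) (hα1 : α < 1) (m : ℕ) :
    |Lam α (m+1)| = α / (m+1) * ∏ i ∈ range m, (1 - α / (i+1)) := by
  have key : rchoose α (m+1) = α / ((m:ℝ)+1) * rchoose (α-1) m := by
    unfold rchoose
    have hfac : ((m+1).factorial : ℝ) = ((m:ℝ)+1) * (m.factorial : ℝ) := by
      push_cast [Nat.factorial_succ]; ring
    have key2 : ∏ i ∈ range (m+1), (α - i) = α * ∏ i ∈ range m, (α - 1 - i) := by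
      rw [Finset.prod_range_succ']
      simp only [Nat.cast_zero, sub_zero, Nat.cast_add, Nat.cast_one]
      rw [mul_comm]
      congr 1
      apply Finset.prod_congr rfl
      intro i _; ring
    rw [key2, hfac]
    have h1 : ((m:ℝ)+1) ≠ 0 := by positivity
    have h2 : (m.factorial : ℝ) ≠ 0 := by positivity
    field_simp
  rw [Lam, abs_mul, abs_pow, abs_neg, abs_one, one_pow, one_mul, key, abs_mul,
    abs_rchoose_sub_one α hα0 hα1 m, abs_of_pos (by positivity : (0:ℝ) < α / ((m:ℝ)+1))]

lemma abs_lam_le (α : ℝ) (hα0 : 0 < α) (hα1 : α < 1) (m : ℕ) :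
    |Lam α (m+1)| ≤ α * ((m:ℝ)+1) ^ (-(1+α)) := by
  rw [abs_lam_eq α hα0 hα1 m]
  have h1 : ∏ i ∈ range m, (1 - α / (i+1)) ≤ ((m:ℝ)+1) ^ (-α) :=
    prod_one_sub_le α hα0 hα1 m
  have h2 : ((m:ℝ)+1) ^ (-(1+α)) = (1/((m:ℝ)+1)) * ((m:ℝ)+1) ^ (-α) := by
    rw [show -(1+α) = (-1) + (-α) by ring, Real.rpow_add (by positivity),
      Real.rpow_neg_one]
    ring
  rw [h2]
  have h3 : (0:ℝ) < ((m:ℝ)+1) := by positivity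
  calc α / (m+1) * ∏ i ∈ range m, (1 - α / (i+1))
      ≤ α / ((m:ℝ)+1) * (((m:ℝ)+1) ^ (-α)) := by
        apply mul_le_mul_of_nonneg_left h1 (by positivity)
    _ = α * ((1/((m:ℝ)+1)) * ((m:ℝ)+1) ^ (-α)) := by ring

-- Bernoulli: (1-t)^p ≤ 1 - p*t  for 0 ≤ p ≤ 1, 0 ≤ t ≤ 1
lemma bern (p t : ℝ) (hp0 : 0 ≤ p) (hp1 : p ≤ 1) (ht0 : 0 ≤ t) (ht1 : t ≤ 1) :
    (1 - t) ^ p ≤ 1 - p * t := by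
  have := rpow_one_add_le_one_add_mul_self (s := -t) (by linarith) hp0 hp1
  simpa [sub_eq_add_neg, mul_neg] using this

-- telescoping pieces
-- (i) γ * x^(γ-1) ≤ x^γ - (x-1)^γ  for x ≥ 1, 0 < γ ≤ 1
lemma tele_pos (γ x : ℝ) (hγ0 : 0 < γ) (hγ1 : γ ≤ 1) (hx : 1 ≤ x) :
    γ * x ^ (γ-1) ≤ x ^ γ - (x-1) ^ γ := by
  have hx0 : (0:ℝ) < x := by linarith
  have ht : (x-1)/x = 1 - 1/x := by field_simp
  have hb := bern γ (1/x) hγ0.le hγ1 (by positivity) (by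
    rw [div_le_one hx0]; linarith)
  have h1 : (x-1)^γ = x^γ * (1 - 1/x)^γ := by
    rw [← Real.mul_rpow (by positivity) (by rw [← ht]; exact div_nonneg (by linarith) hx0.le)]
    congr 1
    field_simp
  have h2 : x^γ * (1 - 1/x)^γ ≤ x^γ * (1 - γ * (1/x)) := by
    apply mul_le_mul_of_nonneg_left hb (by positivity)
  have h3 : x^γ * (1 - γ * (1/x)) = x^γ - γ * x^(γ-1) := by
    rw [sub_eq_add_neg γ 1, Real.rpow_add hx0, Real.rpow_neg_one]
    field_simp
  nlinarith [h1, h2, h3]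

lemma tele_neg (α x : ℝ) (hα0 : 0 < α) (hα1 : α < 1) (hx : 2 ≤ x) :
    α * x ^ (-(1+α)) ≤ (x-1) ^ (-α) - x ^ (-α) := by
  have hx0 : (0:ℝ) < x := by linarith
  have hx1 : (0:ℝ) < x - 1 := by linarith
  have ht0 : (0:ℝ) < 1/x := by positivity
  have ht1 : 1/x ≤ 1/2 := by
    rw [div_le_div_iff₀ hx0 (by norm_num)]; linarith
  -- (1+α/x)(1-1/x)^α ≤ (1+α/x)(1-α/x) ≤ 1
  have hb := bern α (1/x) hα0.le hα1.le ht0.le (by linarith)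
  have hmul : (1 + α/x) * (1 - 1/x)^α ≤ 1 := by
    have h1 : (1 + α/x) * (1 - 1/x)^α ≤ (1 + α/x) * (1 - α * (1/x)) := by
      apply mul_le_mul_of_nonneg_left hb (by positivity)
    have h2 : (1 + α/x) * (1 - α * (1/x)) = 1 - (α/x)^2 := by
      field_simp; ring
    nlinarith [sq_nonneg (α/x)]
  -- want (x-1)^{-α} ≥ x^{-α} + α x^{-1-α} = x^{-α}(1 + α/x)
  have key : x^(-α) * (1 + α/x) ≤ (x-1)^(-α) := by
    have e1 : (x-1)^(-α) = x^(-α) * (1 - 1/x)^(-α) := by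
      rw [← Real.mul_rpow hx0.le (by rw [show 1 - 1/x = (x-1)/x by field_simp]; positivity)]
      congr 1
      field_simp
    rw [e1]
    have hpos : (0:ℝ) < (1 - 1/x)^(-α) := by
      apply Real.rpow_pos_of_pos
      rw [show 1 - 1/x = (x-1)/x by field_simp]; positivity
    have h4 : (1 + α/x) * (1 - 1/x)^α ≤ 1 := hmul
    have h5 : (1 - 1/x)^α * (1 - 1/x)^(-α) = 1 := by
      rw [← Real.rpow_add (by rw [show 1 - 1/x = (x-1)/x by field_simp]; positivity)]
      simp
    have hxp : (0:ℝ) < x^(-α) := Real.rpow_pos_of_pos hx0 _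
    have h6 : (1 + α/x) ≤ (1 - 1/x)^(-α) := by
      nlinarith [mul_le_mul_of_nonneg_right h4 hpos.le, h5]
    nlinarith
  have e2 : α * x^(-(1+α)) = x^(-α) * (α/x) := by
    rw [show -(1+α) = (-α) + (-1) by ring, Real.rpow_add hx0, Real.rpow_neg_one]
    ring
  have hxp : (0:ℝ) < x^(-α) := Real.rpow_pos_of_pos hx0 _
  nlinarith [key, e2]

lemma sum_rpow_le (γ : ℝ) (hγ0 : 0 < γ) (hγ1 : γ < 1) (N : ℕ) :
    ∑ n ∈ range (N+1), (n:ℝ) ^ (γ-1) ≤ (N:ℝ) ^ γ / γ := by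
  induction N with
  | zero =>
    simp [Real.zero_rpow (by linarith : γ - 1 ≠ 0), Real.zero_rpow (by linarith : γ ≠ 0)]
  | succ N ih =>
    rw [Finset.sum_range_succ]
    have ht := tele_pos γ ((N:ℝ)+1) hγ0 hγ1.le (by have := Nat.cast_nonneg (α:=ℝ) N; linarith)
    have h1 : ((N:ℝ)+1) ^ (γ-1) ≤ (((N:ℝ)+1)^γ - (N:ℝ)^γ)/γ := by
      rw [le_div_iff₀ hγ0]
      have : ((N:ℝ)+1) - 1 = (N:ℝ) := by ring
      rw [this] at ht
      linarith
    push_cast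
    have : ∑ n ∈ range (N+1), (n:ℝ) ^ (γ-1) ≤ (N:ℝ)^γ/γ := ih
    calc ∑ n ∈ range (N+1), (n:ℝ) ^ (γ-1) + ((N:ℝ)+1)^(γ-1)
        ≤ (N:ℝ)^γ/γ + (((N:ℝ)+1)^γ - (N:ℝ)^γ)/γ := by linarith
      _ = ((N:ℝ)+1)^γ/γ := by ring

lemma sum_tail_le (α : ℝ) (hα0 : 0 < α) (hα1 : α < 1) (N K : ℕ) (hN : 1 ≤ N) :
    ∑ n ∈ range K, α * ((n:ℝ)+N+1) ^ (-(1+α)) ≤ (N:ℝ)^(-α) - ((N:ℝ)+K)^(-α) := by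
  induction K with
  | zero => simp
  | succ K ih =>
    rw [Finset.sum_range_succ]
    have hNr : (1:ℝ) ≤ (N:ℝ) := by exact_mod_cast hN
    have ht := tele_neg α ((N:ℝ)+K+1) hα0 hα1 (by
      have : (0:ℝ) ≤ (K:ℝ) := Nat.cast_nonneg K
      linarith)
    have : ((N:ℝ)+K+1) - 1 = (N:ℝ)+K := by ring
    rw [this] at ht
    push_cast
    have e : ((K:ℝ)+N+1) = ((N:ℝ)+K+1) := by ring
    rw [e, show ((N:ℝ) + ((K:ℝ)+1)) = ((N:ℝ)+(K:ℝ)+1) from by ring]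
    linarith

lemma summable_abs_lam (α : ℝ) (hα0 : 0 < α) (hα1 : α < 1) :
    Summable (fun m => |Lam α m|) := by
  have hs : Summable (fun m : ℕ => α * ((m:ℝ)+1) ^ (-(1+α))) := by
    apply Summable.mul_left
    have := (Real.summable_nat_rpow (p := -(1+α))).2 (by linarith)
    exact_mod_cast this.comp_injective (add_left_injective 1)
  rw [← summable_nat_add_iff 1]
  apply hs.of_nonneg_of_le (fun m => abs_nonneg _)
  intro m
  exact abs_lam_le α hα0 hα1 m

lemma tsum_tail_lam_le (α : ℝ) (hα0 : 0 < α) (hα1 : α < 1) (N : ℕ) (hN : 1 ≤ N) :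
    ∑' n : ℕ, |Lam α (n+(N+1))| ≤ (N:ℝ)^(-α) := by
  have hsum : Summable (fun n : ℕ => |Lam α (n+(N+1))|) :=
    (summable_abs_lam α hα0 hα1).comp_injective (add_left_injective (N+1))
  apply Summable.tsum_le_of_sum_le hsum
  intro s
  classical
  obtain ⟨K, hK⟩ : ∃ K, s ⊆ range K := ⟨s.sup id + 1, fun x hx =>
    Finset.mem_range.2 (Nat.lt_succ_of_le (Finset.le_sup (f := id) hx))⟩
  calc ∑ n ∈ s, |Lam α (n+(N+1))|
      ≤ ∑ n ∈ range K, |Lam α (n+(N+1))| := by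
        apply Finset.sum_le_sum_of_subset_of_nonneg hK
        intro i _ _; exact abs_nonneg _
    _ ≤ ∑ n ∈ range K, α * ((n:ℝ)+N+1) ^ (-(1+α)) := by
        apply Finset.sum_le_sum
        intro n _
        have := abs_lam_le α hα0 hα1 (n+N)
        have e : ((n+N:ℕ):ℝ) + 1 = (n:ℝ)+N+1 := by push_cast; ring
        rw [e] at this
        rw [← add_assoc]; exact this
    _ ≤ (N:ℝ)^(-α) - ((N:ℝ)+K)^(-α) := sum_tail_le α hα0 hα1 N K hN
    _ ≤ (N:ℝ)^(-α) := by
        have : (0:ℝ) ≤ ((N:ℝ)+K)^(-α) :=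
          Real.rpow_nonneg (by positivity) _
        linarith

lemma key_estimate (α β : ℝ) (hα0 : 0 < α) (hαβ : α < β) (hβ : β ≤ 1)
    (A : ℝ) (hA : 0 ≤ A) (v : ℕ → ℝ) (N : ℕ) (hN : 1 ≤ N)
    (hv1 : ∀ n, |v n| ≤ A * (N:ℝ)^β)
    (hv2 : ∀ n, |v n - v 0| ≤ 2*A*(n:ℝ)^β) :
    |∑' n : ℕ, Lam α n * v n| ≤ (2*α/(β-α) + 2) * A * (N:ℝ)^(β-α) := by
  have hα1 : α < 1 := lt_of_lt_of_le hαβ hβ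
  set γ := β - α with hγdef
  have hγ0 : 0 < γ := by simp [hγdef]; linarith
  have hγ1 : γ < 1 := by simp [hγdef]; linarith
  have hNpos : (0:ℝ) < (N:ℝ) := by exact_mod_cast Nat.pos_of_ne_zero (by omega)
  have hNβ : (0:ℝ) ≤ A * (N:ℝ)^β := by positivity
  have habs : Summable (fun n => |Lam α n * v n|) :=
    Summable.of_nonneg_of_le (fun n => abs_nonneg _)
      (fun n => by
        rw [abs_mul]
        exact mul_le_mul_of_nonneg_left (hv1 n) (abs_nonneg _))
      ((summable_abs_lam α hα0 hα1).mul_right (A * (N:ℝ)^β))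
  have hsum : Summable (fun n => Lam α n * v n) := habs.of_abs
  -- split the series
  rw [← hsum.sum_add_tsum_nat_add (N+1)]
  -- front sum decomposition
  have hfront : ∑ n ∈ range (N+1), Lam α n * v n
      = (∑ n ∈ range (N+1), Lam α n * (v n - v 0))
        + (∑ n ∈ range (N+1), Lam α n) * v 0 := by
    rw [Finset.sum_mul, ← Finset.sum_add_distrib]
    apply Finset.sum_congr rfl
    intro n _; ring
  -- Term 1
  have hT1 : |∑ n ∈ range (N+1), Lam α n * (v n - v 0)| ≤ 2*A*α * ((N:ℝ)^γ/γ) := by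
    calc |∑ n ∈ range (N+1), Lam α n * (v n - v 0)|
        ≤ ∑ n ∈ range (N+1), |Lam α n * (v n - v 0)| := Finset.abs_sum_le_sum_abs _ _
      _ ≤ ∑ n ∈ range (N+1), 2*A*α * (n:ℝ)^(γ-1) := by
          apply Finset.sum_le_sum
          intro n _
          match n with
          | 0 => simp [Real.zero_rpow (by linarith : γ - 1 ≠ 0)]
          | Nat.succ m =>
            rw [abs_mul]
            have h1 := abs_lam_le α hα0 hα1 m
            have h2 := hv2 (m+1)
            have hm1 : (0:ℝ) < (m:ℝ)+1 := by positivity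
            have e : ((m:ℝ)+1)^(-(1+α)) * (2*A*((m:ℝ)+1)^β) = 2*A*((m:ℝ)+1)^(γ-1) := by
              have e0 : ((m:ℝ)+1)^(-(1+α)) * ((m:ℝ)+1)^β = ((m:ℝ)+1)^(γ-1) := by
                rw [← Real.rpow_add hm1]
                congr 1
                rw [hγdef]; ring
              linear_combination 2*A*e0
            have hcast : ((m+1:ℕ):ℝ) = (m:ℝ)+1 := by push_cast; ring
            rw [hcast]
            calc |Lam α (m+1)| * |v (m+1) - v 0|
                ≤ (α * ((m:ℝ)+1)^(-(1+α))) * (2*A*((m+1:ℕ):ℝ)^β) := by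
                  apply mul_le_mul h1 h2 (abs_nonneg _)
                  positivity
              _ = 2*A*α * ((m:ℝ)+1)^(γ-1) := by
                  rw [hcast]
                  nlinarith [e]
      _ = 2*A*α * ∑ n ∈ range (N+1), (n:ℝ)^(γ-1) := by rw [Finset.mul_sum]
      _ ≤ 2*A*α * ((N:ℝ)^γ/γ) := by
          apply mul_le_mul_of_nonneg_left (sum_rpow_le γ hγ0 hγ1 N) (by positivity)
  -- Term 2
  have hT2 : |(∑ n ∈ range (N+1), Lam α n) * v 0| ≤ A * (N:ℝ)^γ := by
    rw [abs_mul, lam_partial_sum, abs_mul, abs_pow, abs_neg, abs_one, one_pow, one_mul]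
    have h1 : |rchoose (α-1) N| ≤ ((N:ℝ)+1)^(-α) :=
      (abs_rchoose_sub_one α hα0 hα1 N) ▸ prod_one_sub_le α hα0 hα1 N
    have h2 : ((N:ℝ)+1)^(-α) ≤ (N:ℝ)^(-α) := by
      rw [Real.rpow_neg (by positivity), Real.rpow_neg hNpos.le]
      apply inv_anti₀ (Real.rpow_pos_of_pos hNpos α)
      exact Real.rpow_le_rpow hNpos.le (by linarith) hα0.le
    calc |rchoose (α-1) N| * |v 0|
        ≤ (N:ℝ)^(-α) * (A * (N:ℝ)^β) := by
          apply mul_le_mul (le_trans h1 h2) (hv1 0) (abs_nonneg _)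
          exact Real.rpow_nonneg hNpos.le _
      _ = A * (N:ℝ)^γ := by
          rw [hγdef, show β - α = (-α) + β by ring, Real.rpow_add hNpos]
          ring
  -- Term 3
  have hT3 : |∑' n : ℕ, Lam α (n+(N+1)) * v (n+(N+1))| ≤ A * (N:ℝ)^γ := by
    have habs' : Summable (fun n : ℕ => |Lam α (n+(N+1)) * v (n+(N+1))|) := by
      rw [← summable_nat_add_iff (N+1)] at habs
      exact habs
    have hsumlam : Summable (fun n : ℕ => |Lam α (n+(N+1))|) := by
      have := summable_abs_lam α hα0 hα1
      rw [← summable_nat_add_iff (N+1)] at this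
      exact this
    calc |∑' n : ℕ, Lam α (n+(N+1)) * v (n+(N+1))|
        ≤ ∑' n : ℕ, |Lam α (n+(N+1)) * v (n+(N+1))| := by
          have := norm_tsum_le_tsum_norm (f := fun n : ℕ => Lam α (n+(N+1)) * v (n+(N+1)))
            (by simpa only [Real.norm_eq_abs] using habs')
          simpa only [Real.norm_eq_abs] using this
      _ ≤ ∑' n : ℕ, |Lam α (n+(N+1))| * (A * (N:ℝ)^β) := by
          apply Summable.tsum_le_tsum _ habs' (hsumlam.mul_right _)
          intro n
          rw [abs_mul]
          exact mul_le_mul_of_nonneg_left (hv1 _) (abs_nonneg _)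
      _ = (∑' n : ℕ, |Lam α (n+(N+1))|) * (A * (N:ℝ)^β) := by
          rw [tsum_mul_right]
      _ ≤ (N:ℝ)^(-α) * (A * (N:ℝ)^β) := by
          apply mul_le_mul_of_nonneg_right (tsum_tail_lam_le α hα0 hα1 N hN) hNβ
      _ = A * (N:ℝ)^γ := by
          rw [hγdef, show β - α = (-α) + β by ring, Real.rpow_add hNpos]
          ring
  -- combine
  rw [hfront]
  have e2 : 2*A*α * ((N:ℝ)^γ/γ) = (2*α/γ) * A * (N:ℝ)^γ := by
    rw [div_eq_mul_inv, div_eq_mul_inv]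
    ring
  calc |∑ n ∈ range (N+1), Lam α n * (v n - v 0)
        + (∑ n ∈ range (N+1), Lam α n) * v 0
        + ∑' n : ℕ, Lam α (n+(N+1)) * v (n+(N+1))|
      ≤ |∑ n ∈ range (N+1), Lam α n * (v n - v 0)|
        + |(∑ n ∈ range (N+1), Lam α n) * v 0|
        + |∑' n : ℕ, Lam α (n+(N+1)) * v (n+(N+1))| := by
        apply le_trans (abs_add_le _ _)
        apply add_le_add_left (abs_add_le _ _)
    _ ≤ 2*A*α * ((N:ℝ)^γ/γ) + A * (N:ℝ)^γ + A * (N:ℝ)^γ := by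
        apply add_le_add (add_le_add hT1 hT2) hT3
    _ = (2*α/γ + 2) * A * (N:ℝ)^γ := by rw [e2]; ring

/-- Hölder regularity: if `u` is in the discrete Hölder class `C_h^{0,β}` with seminorm `M`,
then `(δ_right)^α u` is in `C_h^{0,β−α}`, with constant depending only on `α` (and `β`). -/
theorem holder_regularity (α β : ℝ) (hα : 0 < α) (hαβ : α < β) (hβ : β ≤ 1) :
    ∃ C : ℝ, 0 < C ∧ ∀ h : ℝ, 0 < h → ∀ M : ℝ, ∀ u : ℤ → ℝ,
      (∀ j m : ℤ, |u j - u m| ≤ M * h ^ β * |(j : ℝ) - (m : ℝ)| ^ β) →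
      ∀ j m : ℤ, j ≠ m →
        |deltaRightPow α h u j - deltaRightPow α h u m| ≤
          C * M * h ^ (β - α) * |(j : ℝ) - (m : ℝ)| ^ (β - α) := by
  have hα1 : α < 1 := lt_of_lt_of_le hαβ hβ
  have hγ0 : (0:ℝ) < β - α := by linarith
  refine ⟨2*α/(β-α) + 2, by positivity, ?_⟩
  intro h hh M u hu j k hjk
  -- cast facts
  have hjkR : ((j:ℝ)) ≠ (k:ℝ) := by exact_mod_cast fun hc => hjk (by exact_mod_cast hc)
  set N : ℕ := (j - k).natAbs with hNdef
  have hN1 : 1 ≤ N := by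
    rcases Nat.eq_zero_or_pos N with h0 | h1
    · exfalso; apply hjk; rw [hNdef] at h0
      have := Int.natAbs_eq_zero.1 h0; omega
    · exact h1
  have hNcast : |(j:ℝ) - (k:ℝ)| = (N:ℝ) := by
    rw [hNdef, Nat.cast_natAbs]
    push_cast
    ring_nf
  have hNpos : (0:ℝ) < N := by exact_mod_cast hN1
  -- M nonneg
  have hXpos : (0:ℝ) < |(j:ℝ)-(k:ℝ)|^β := by
    apply Real.rpow_pos_of_pos
    rw [abs_pos]; exact sub_ne_zero_of_ne hjkR
  have hM : 0 ≤ M := by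
    have h1 := le_trans (abs_nonneg _) (hu j k)
    have hhb : (0:ℝ) < h^β := Real.rpow_pos_of_pos hh β
    nlinarith [mul_pos hhb hXpos]
  have hA : (0:ℝ) ≤ M * h^β := by
    have : (0:ℝ) < h^β := Real.rpow_pos_of_pos hh β
    positivity
  -- difference sequence
  set v : ℕ → ℝ := fun n => u (j + (n:ℤ)) - u (k + (n:ℤ)) with hvdef
  have hv1 : ∀ n, |v n| ≤ (M * h^β) * (N:ℝ)^β := by
    intro n
    have := hu (j + (n:ℤ)) (k + (n:ℤ))
    have e : |((j + (n:ℤ) : ℤ):ℝ) - ((k + (n:ℤ) : ℤ):ℝ)| = |(j:ℝ) - (k:ℝ)| := by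
      push_cast; ring_nf
    rw [e, hNcast] at this
    simpa [hvdef] using this
  have hv2 : ∀ n, |v n - v 0| ≤ 2*(M * h^β)*(n:ℝ)^β := by
    intro n
    have e0 : v 0 = u j - u k := by simp [hvdef]
    have h1 := hu (j + (n:ℤ)) j
    have h2 := hu (k + (n:ℤ)) k
    have e1 : |((j + (n:ℤ) : ℤ):ℝ) - (j:ℝ)| = (n:ℝ) := by
      push_cast; simp
    have e2 : |((k + (n:ℤ) : ℤ):ℝ) - (k:ℝ)| = (n:ℝ) := by
      push_cast; simp
    rw [e1] at h1; rw [e2] at h2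
    have : |v n - v 0| ≤ |u (j + (n:ℤ)) - u j| + |u (k + (n:ℤ)) - u k| := by
      rw [e0, hvdef]
      have : u (j + (n:ℤ)) - u (k + (n:ℤ)) - (u j - u k)
          = (u (j + (n:ℤ)) - u j) - (u (k + (n:ℤ)) - u k) := by ring
      rw [this]
      exact abs_sub _ _
    linarith
  -- summability of the difference series
  have hd : Summable (fun n : ℕ => Lam α n * v n) := by
    apply Summable.of_abs
    apply Summable.of_nonneg_of_le (fun n => abs_nonneg _)
      (fun n => by
        rw [abs_mul]
        exact mul_le_mul_of_nonneg_left (hv1 n) (abs_nonneg _))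
      ((summable_abs_lam α hα hα1).mul_right ((M * h^β) * (N:ℝ)^β))
  by_cases hs : Summable (fun n : ℕ => Lam α n * u (j + (n:ℤ)))
  · -- summable case
    have hsk : Summable (fun n : ℕ => Lam α n * u (k + (n:ℤ))) := by
      have : (fun n : ℕ => Lam α n * u (k + (n:ℤ)))
          = fun n => Lam α n * u (j + (n:ℤ)) - Lam α n * v n := by
        funext n; rw [hvdef]; ring
      rw [this]
      exact hs.sub hd
    have hdiff : deltaRightPow α h u j - deltaRightPow α h u k
        = h^(-α) * ∑' n : ℕ, Lam α n * v n := by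
      unfold deltaRightPow
      rw [← mul_sub, ← Summable.tsum_sub hs hsk]
      congr 1
      apply tsum_congr
      intro n
      rw [hvdef]; ring
    rw [hdiff, abs_mul, abs_of_pos (Real.rpow_pos_of_pos hh (-α))]
    have hkey := key_estimate α β hα hαβ hβ (M * h^β) hA v N hN1 hv1 hv2
    calc h^(-α) * |∑' n : ℕ, Lam α n * v n|
        ≤ h^(-α) * ((2*α/(β-α) + 2) * (M * h^β) * (N:ℝ)^(β-α)) := by
          apply mul_le_mul_of_nonneg_left hkey (le_of_lt (Real.rpow_pos_of_pos hh (-α)))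
      _ = (2*α/(β-α) + 2) * M * h^(β-α) * |(j:ℝ) - (k:ℝ)|^(β-α) := by
          rw [hNcast, show β - α = (-α) + β from by ring, Real.rpow_add hh]
          ring
  · -- non-summable case: both tsums vanish
    have hsk : ¬ Summable (fun n : ℕ => Lam α n * u (k + (n:ℤ))) := by
      intro hc
      apply hs
      have : (fun n : ℕ => Lam α n * u (j + (n:ℤ)))
          = fun n => Lam α n * u (k + (n:ℤ)) + Lam α n * v n := by
        funext n; rw [hvdef]; ring
      rw [this]
      exact hc.add hd
    unfold deltaRightPow
    rw [tsum_eq_zero_of_not_summable hs, tsum_eq_zero_of_not_summable hsk]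
    simp only [mul_zero, sub_zero, sub_self, abs_zero]
    have h1 : (0:ℝ) < h^(β-α) := Real.rpow_pos_of_pos hh _
    have h2 : (0:ℝ) ≤ |(j:ℝ) - (k:ℝ)|^(β-α) := Real.rpow_nonneg (abs_nonneg _) _
    positivity
end
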